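/- arXiv:2405.12248 — 5 statements merged into one kernel-verified Lean document; each statement's English description precedes it below -/
import Mathlib

section
/- For every integer k ≥ 1, 1/2 = 1/(4k+2) + Σ_{l=1}^{k} Σ_{n=1}^{∞} (-1)^{l-1} · (2k)! / ((2k+1-2l)! · (nπ)^{2l}). -/
open Real

open PowerSeries Finset in
private lemma aux_even :
    PowerSeries.rescale (-1 : ℚ) (PowerSeries.rescale (2:ℚ) (bernoulliPowerSeries ℚ) * PowerSeries.exp ℚ)
      = PowerSeries.rescale (2:ℚ) (bernoulliPowerSeries ℚ) * PowerSeries.exp ℚ := by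
  set B := bernoulliPowerSeries ℚ with hB
  set E := PowerSeries.exp ℚ with hE
  have hEE : rescale (-2 : ℚ) E * rescale (2:ℚ) E = 1 := by
    rw [hE, exp_mul_exp_eq_exp_add]
    norm_num [rescale_zero]
  have hB2 : rescale (-2:ℚ) B * (rescale (-2:ℚ) E - 1) = PowerSeries.C (R := ℚ) (-2) * X := by
    rw [← map_one (rescale (-2:ℚ)), ← map_sub, ← map_mul, hB, hE,
      bernoulliPowerSeries_mul_exp_sub_one, rescale_X]
  have hB2' : rescale (2:ℚ) B * (rescale (2:ℚ) E - 1) = PowerSeries.C (R := ℚ) 2 * X := by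
    rw [← map_one (rescale (2:ℚ)), ← map_sub, ← map_mul, hB, hE,
      bernoulliPowerSeries_mul_exp_sub_one, rescale_X]
  have hne : rescale (2:ℚ) E - 1 ≠ 0 := by
    intro h
    have h2 := congrArg (coeff (R := ℚ) 1) h
    simp [coeff_rescale, hE, PowerSeries.coeff_exp, Nat.factorial] at h2
  apply mul_right_cancel₀ hne
  have expand : rescale (2:ℚ) E - 1 = -((rescale (-2:ℚ) E - 1) * rescale (2:ℚ) E) := by
    rw [sub_mul, one_mul, hEE]; ring
  calc rescale (-1:ℚ) (rescale 2 B * E) * (rescale 2 E - 1)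
      = (rescale ((2:ℚ) * -1) B * rescale (-1:ℚ) E) * (-((rescale (-2:ℚ) E - 1) * rescale 2 E)) := by
        rw [map_mul, rescale_rescale, ← expand]
    _ = -(rescale (-2:ℚ) B * (rescale (-2:ℚ) E - 1)) * (rescale (-1:ℚ) E * rescale 2 E) := by
        rw [show ((2:ℚ) * -1) = -2 by norm_num]; ring
    _ = -(PowerSeries.C (R := ℚ) (-2) * X) * rescale ((-1)+2 : ℚ) E := by
        rw [hB2, hE, exp_mul_exp_eq_exp_add]
    _ = (PowerSeries.C (R := ℚ) 2 * X) * E := by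
        rw [show ((-1)+2 : ℚ) = 1 by norm_num, rescale_one, RingHom.id_apply, map_neg]; ring
    _ = (rescale 2 B * E) * (rescale 2 E - 1) := by rw [← hB2']; ring

open PowerSeries Finset in
private lemma aux_coeff_zero {n : ℕ} (hn : Odd n) :
    ∑ i ∈ range (n+1), (2:ℚ)^i * (bernoulli i / i.factorial) * (1 / (n - i).factorial) = 0 := by
  have h2 := congrArg (coeff (R := ℚ) n) aux_even
  rw [coeff_rescale, hn.neg_one_pow] at h2
  have h3 : (coeff (R := ℚ) n) (rescale (2:ℚ) (bernoulliPowerSeries ℚ) * PowerSeries.exp ℚ) = 0 := by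
    linarith
  rw [coeff_mul, Nat.sum_antidiagonal_eq_sum_range_succ_mk] at h3
  rw [← h3]
  apply Finset.sum_congr rfl
  intro i hi
  simp [coeff_rescale, bernoulliPowerSeries, coeff_mk, PowerSeries.coeff_exp]

private lemma sum_shift (g : ℕ → ℚ) (hg : ∀ j, g (2*j + 3) = 0) (k : ℕ) :
    ∑ i ∈ Finset.range (2*k), g (i+2) = ∑ l ∈ Finset.Icc 1 k, g (2*l) := by
  induction k with
  | zero => simp
  | succ m ih =>
    rw [show 2*(m+1) = (2*m)+1+1 by ring, Finset.sum_range_succ, Finset.sum_range_succ, ih,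
      Finset.sum_Icc_succ_top (by omega : 1 ≤ m + 1)]
    rw [show 2*m+1+2 = 2*m+3 by ring, hg m, show 2*m+2 = 2*(m+1) by ring]
    ring

private lemma key_sum (k : ℕ) (hk : 1 ≤ k) :
    ∑ l ∈ Finset.Icc 1 k, (((2*k+1).choose (2*l) : ℚ) * 2^(2*l) * bernoulli (2*l)) = 2*k := by
  have h := aux_coeff_zero (n := 2*k+1) ⟨k, by omega⟩
  set f : ℕ → ℚ := fun i => ((2*k+1).choose i : ℚ) * 2^i * bernoulli i with hf
  have h0 : ∑ i ∈ Finset.range (2*k+1+1), f i = 0 := by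
    have : ∑ i ∈ Finset.range (2*k+1+1), f i
        = ((2*k+1).factorial : ℚ) * ∑ i ∈ Finset.range (2*k+1+1),
            (2:ℚ)^i * (bernoulli i / i.factorial) * (1 / (2*k+1 - i).factorial) := by
      rw [Finset.mul_sum]
      apply Finset.sum_congr rfl
      intro i hi
      have hi' : i ≤ 2*k+1 := by simpa [Nat.lt_succ_iff] using hi
      have hfac : (((2*k+1).choose i : ℚ)) * i.factorial * (2*k+1-i).factorial
          = ((2*k+1).factorial : ℚ) := by
        exact_mod_cast congrArg (Nat.cast (R := ℚ))
          (Nat.choose_mul_factorial_mul_factorial hi')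
      have h1 : (i.factorial : ℚ) ≠ 0 := Nat.cast_ne_zero.mpr i.factorial_ne_zero
      have h2 : ((2*k+1-i).factorial : ℚ) ≠ 0 := Nat.cast_ne_zero.mpr (Nat.factorial_ne_zero _)
      rw [hf]
      field_simp
      linear_combination bernoulli i * hfac
    rw [this, h, mul_zero]
  have hodd : ∀ j, f (2*j + 3) = 0 := by
    intro j
    have : bernoulli (2*j+3) = 0 := by
      rw [bernoulli_eq_bernoulli'_of_ne_one (by omega)]
      exact bernoulli'_eq_zero_of_odd ⟨j+1, by omega⟩ (by omega)
    simp [hf, this]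
  rw [Finset.sum_range_succ' f (2*k+1), Finset.sum_range_succ' (fun i => f (i+1)) (2*k)] at h0
  rw [sum_shift f hodd k] at h0
  have hf0 : f 0 = 1 := by simp [hf]
  have hf1 : f 1 = -(2*k+1) := by
    simp [hf, bernoulli_one]
    ring
  rw [hf0, hf1] at h0
  linarith

private lemma tsum_eval (k l : ℕ) (hl : 1 ≤ l) (hlk : l ≤ k) :
    (∑' n : ℕ, (-1 : ℝ) ^ (l - 1) * ((2 * k).factorial : ℝ) /
        (((2 * k + 1 - 2 * l).factorial : ℝ) * (((n : ℝ) + 1) * π) ^ (2 * l)))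
      = ((2*k+1).choose (2*l) : ℝ) * 2^(2*l) * ((bernoulli (2*l) : ℚ) : ℝ) / (2 * (2*k+1)) := by
  obtain ⟨m, rfl⟩ : ∃ m, l = m + 1 := ⟨l - 1, by omega⟩
  have hl0 : m + 1 ≠ 0 := by omega
  have h := hasSum_zeta_nat hl0
  have h1 : HasSum (fun n : ℕ => 1 / ((n:ℝ)+1) ^ (2*(m+1)))
      ((-1 : ℝ) ^ (m + 1 + 1) * (2 : ℝ) ^ (2 * (m+1) - 1) * π ^ (2 * (m+1)) *
        ((bernoulli (2 * (m+1)) : ℚ) : ℝ) / (2 * (m+1)).factorial) := by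
    have h2 := (hasSum_nat_add_iff (f := fun n : ℕ => 1 / (n:ℝ) ^ (2*(m+1))) 1).mpr
      (by simpa using h)
    simpa using h2
  set c : ℝ := (-1 : ℝ) ^ (m + 1 - 1) * ((2 * k).factorial : ℝ) /
      (((2 * k + 1 - 2 * (m+1)).factorial : ℝ) * π ^ (2 * (m+1))) with hc
  have h2 := h1.mul_left c
  have hπ : (π : ℝ) ≠ 0 := Real.pi_ne_zero
  have hfe : ((2 * k + 1 - 2 * (m+1)).factorial : ℝ) ≠ 0 :=
    Nat.cast_ne_zero.mpr (Nat.factorial_ne_zero _)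
  have hpt : ∀ n : ℕ, (-1 : ℝ) ^ (m + 1 - 1) * ((2 * k).factorial : ℝ) /
        (((2 * k + 1 - 2 * (m+1)).factorial : ℝ) * (((n : ℝ) + 1) * π) ^ (2 * (m+1)))
      = c * (1 / ((n:ℝ)+1) ^ (2*(m+1))) := by
    intro n
    have hn : ((n:ℝ)+1) ≠ 0 := by positivity
    rw [hc, mul_pow]
    field_simp
  rw [tsum_congr hpt, h2.tsum_eq]
  -- now arithmetic
  have hfac : (((2*k+1).choose (2*(m+1)) : ℝ)) * ((2*(m+1)).factorial : ℝ)
      * ((2*k+1-2*(m+1)).factorial : ℝ) = ((2*k+1).factorial : ℝ) := by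
    exact_mod_cast congrArg (Nat.cast (R := ℝ))
      (Nat.choose_mul_factorial_mul_factorial (show 2*(m+1) ≤ 2*k+1 by omega))
  have hfacsucc : ((2*k+1).factorial : ℝ) = ((2*k+1 : ℕ) : ℝ) * ((2*k).factorial : ℝ) := by
    exact_mod_cast congrArg (Nat.cast (R := ℝ)) (Nat.factorial_succ (2*k))
  have hfe2 : ((2*(m+1)).factorial : ℝ) ≠ 0 := Nat.cast_ne_zero.mpr (Nat.factorial_ne_zero _)
  have hsign : (-1 : ℝ) ^ (m + 1 - 1) * (-1 : ℝ) ^ (m + 1 + 1) = 1 := by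
    rw [← pow_add, show (m+1-1) + (m+1+1) = 2*(m+1) by omega, pow_mul]
    norm_num
  have hpow : (2:ℝ) ^ (2*(m+1) - 1) * 2 = 2 ^ (2*(m+1)) := by
    rw [← pow_succ, show 2*(m+1) - 1 + 1 = 2*(m+1) by omega]
  rw [hc]
  have hs : (-1:ℝ)^m * (-1:ℝ)^m = 1 := by
    rw [← pow_add, ← two_mul, pow_mul]; norm_num
  have hfac2 : (((2*k+1).choose (2*(m+1)) : ℝ)) * ((2*(m+1)).factorial : ℝ)
      * ((2*k+1-2*(m+1)).factorial : ℝ) = (2*(k:ℝ)+1) * ((2*k).factorial : ℝ) := by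
    rw [hfac, hfacsucc]; push_cast; ring
  rw [div_mul_div_comm]
  rw [div_eq_div_iff (by positivity) (by positivity)]
  simp only [show m+1-1 = m from rfl, show 2*(m+1)-1 = 2*m+1 from by omega]
  push_cast
  linear_combination (((2*k).factorial : ℝ) * 2^(2*m+1) * π^(2*m+2)
      * ((bernoulli (2*(m+1)) : ℚ) : ℝ) * 2 * (2*(k:ℝ)+1)) * hs
    - (2^(2*m+2) * ((bernoulli (2*(m+1)) : ℚ) : ℝ) * π^(2*m+2)) * hfac2

/-- For every integer `k ≥ 1`,
`1/2 = 1/(4k+2) + ∑_{l=1}^{k} ∑_{n=1}^{∞} (-1)^(l-1) (2k)! / ((2k+1-2l)! (nπ)^(2l))`. -/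
theorem stmt_0 (k : ℕ) (hk : 1 ≤ k) :
    (1 / 2 : ℝ) = 1 / (4 * k + 2) +
      ∑ l ∈ Finset.Icc 1 k, ∑' n : ℕ,
        (-1 : ℝ) ^ (l - 1) * ((2 * k).factorial : ℝ) /
          (((2 * k + 1 - 2 * l).factorial : ℝ) * (((n : ℝ) + 1) * π) ^ (2 * l)) := by
  have hsum : ∑ l ∈ Finset.Icc 1 k, (∑' n : ℕ,
        (-1 : ℝ) ^ (l - 1) * ((2 * k).factorial : ℝ) /
          (((2 * k + 1 - 2 * l).factorial : ℝ) * (((n : ℝ) + 1) * π) ^ (2 * l)))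
      = ∑ l ∈ Finset.Icc 1 k,
          ((2*k+1).choose (2*l) : ℝ) * 2^(2*l) * ((bernoulli (2*l) : ℚ) : ℝ) / (2 * (2*k+1)) := by
    apply Finset.sum_congr rfl
    intro l hl
    rw [Finset.mem_Icc] at hl
    exact tsum_eval k l hl.1 hl.2
  rw [hsum, ← Finset.sum_div]
  have hnum : ∑ l ∈ Finset.Icc 1 k,
      ((2*k+1).choose (2*l) : ℝ) * 2^(2*l) * ((bernoulli (2*l) : ℚ) : ℝ) = 2*k := by
    have hq := key_sum k hk
    have := congrArg (Rat.cast (K := ℝ)) hq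
    push_cast at this
    convert this using 2 with l hl
  have hk1 : ((2:ℝ)*k+1) ≠ 0 := by positivity
  have hk2 : ((4:ℝ)*k+2) ≠ 0 := by positivity
  rw [hnum]
  field_simp
  ring
end

section
/- For all integers k ≥ 0 and n ≥ 1, (1/π) · ∫_{-π}^{0} x^{2k} · sin(nx) dx equals Σ_{l=0}^{k} π^{2k-2l-1} · (-1)^{n+l} · (2k)! / (n^{2l+1} · (2k-2l)!) − (-1)^{k} · (2k)! / (π · n^{2k+1}). -/
open Real

private lemma cos_n_pi (n : ℕ) : Real.cos (n * π) = (-1) ^ n := by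
  simpa using Real.cos_nat_mul_pi_sub 0 n

private lemma key_deriv (m n : ℕ) (hn : 1 ≤ n) (x : ℝ) :
    HasDerivAt (fun x : ℝ => -(x ^ (m + 2)) * Real.cos (n * x) / n
        + ((m : ℝ) + 2) * x ^ (m + 1) * Real.sin (n * x) / (n : ℝ) ^ 2)
      (x ^ (m + 2) * Real.sin (n * x)
        + (((m : ℝ) + 2) * ((m : ℝ) + 1) / (n : ℝ) ^ 2) * (x ^ m * Real.sin (n * x))) x := by
  have hn0 : (n : ℝ) ≠ 0 := by positivity
  have hx1 : HasDerivAt (fun x : ℝ => (n : ℝ) * x) (n : ℝ) x := by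
    simpa using (hasDerivAt_id x).const_mul (n : ℝ)
  have hcos : HasDerivAt (fun x : ℝ => Real.cos ((n : ℝ) * x))
      (-Real.sin ((n : ℝ) * x) * (n : ℝ)) x := hx1.cos
  have hsin : HasDerivAt (fun x : ℝ => Real.sin ((n : ℝ) * x))
      (Real.cos ((n : ℝ) * x) * (n : ℝ)) x := hx1.sin
  have h1 := (((hasDerivAt_pow (m + 2) x).neg).mul hcos).div_const (n : ℝ)
  have h2 := (((hasDerivAt_pow (m + 1) x).const_mul ((m : ℝ) + 2)).mul hsin).div_const ((n : ℝ) ^ 2)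
  refine (h1.add h2).congr_deriv ?_
  simp only [Pi.neg_apply, Nat.add_one_sub_one]
  push_cast
  field_simp
  ring

private lemma J_rec (k n : ℕ) (hn : 1 ≤ n) :
    ∫ x in (-π)..(0 : ℝ), x ^ (2 * k + 2) * Real.sin (n * x) =
      π ^ (2 * k + 2) * (-1 : ℝ) ^ n / n
        - ((((2 * k : ℕ) : ℝ) + 2) * (((2 * k : ℕ) : ℝ) + 1) / (n : ℝ) ^ 2)
            * ∫ x in (-π)..(0 : ℝ), x ^ (2 * k) * Real.sin (n * x) := by
  have hn0 : (n : ℝ) ≠ 0 := by positivity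
  set c : ℝ := (((2 * k : ℕ) : ℝ) + 2) * (((2 * k : ℕ) : ℝ) + 1) / (n : ℝ) ^ 2 with hc
  have hcont1 : Continuous fun x : ℝ => x ^ (2 * k + 2) * Real.sin (n * x) := by fun_prop
  have hcont2 : Continuous fun x : ℝ => x ^ (2 * k) * Real.sin (n * x) := by fun_prop
  have hint : ∫ x in (-π)..(0 : ℝ),
      (x ^ (2 * k + 2) * Real.sin (n * x) + c * (x ^ (2 * k) * Real.sin (n * x))) =
      π ^ (2 * k + 2) * (-1 : ℝ) ^ n / n := by
    have := intervalIntegral.integral_eq_sub_of_hasDerivAt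
      (f := fun x : ℝ => -(x ^ (2 * k + 2)) * Real.cos (n * x) / n
        + (((2 * k : ℕ) : ℝ) + 2) * x ^ (2 * k + 1) * Real.sin (n * x) / (n : ℝ) ^ 2)
      (f' := fun x : ℝ => x ^ (2 * k + 2) * Real.sin (n * x)
        + c * (x ^ (2 * k) * Real.sin (n * x)))
      (a := -π) (b := (0 : ℝ))
      (fun x _ => key_deriv (2 * k) n hn x)
      ((hcont1.add (continuous_const.mul hcont2)).intervalIntegrable _ _)
    rw [this]
    have hsin : Real.sin ((n : ℝ) * -π) = 0 := by
      rw [mul_neg, Real.sin_neg, Real.sin_nat_mul_pi, neg_zero]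
    have hcos : Real.cos ((n : ℝ) * -π) = (-1) ^ n := by
      rw [mul_neg, Real.cos_neg, cos_n_pi]
    have hpow : (-π) ^ (2 * k + 2) = π ^ (2 * k + 2) :=
      Even.neg_pow ⟨k + 1, by ring⟩ π
    simp only [hsin, hcos, hpow]
    simp
    ring
  have hi1 : IntervalIntegrable (fun x : ℝ => x ^ (2 * k + 2) * Real.sin (n * x))
      MeasureTheory.volume (-π) 0 := hcont1.intervalIntegrable _ _
  have hi2 : IntervalIntegrable (fun x : ℝ => c * (x ^ (2 * k) * Real.sin (n * x)))
      MeasureTheory.volume (-π) 0 := (continuous_const.mul hcont2).intervalIntegrable _ _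
  rw [intervalIntegral.integral_add hi1 hi2, intervalIntegral.integral_const_mul] at hint
  linarith

private lemma J_formula (n : ℕ) (hn : 1 ≤ n) : ∀ k : ℕ,
    ∫ x in (-π)..(0 : ℝ), x ^ (2 * k) * Real.sin (n * x) =
      (∑ l ∈ Finset.range (k + 1),
        π ^ (2 * (k : ℤ) - 2 * (l : ℤ)) * (-1) ^ (n + l) * ((2 * k).factorial : ℝ) /
          ((n : ℝ) ^ (2 * l + 1) * ((2 * k - 2 * l).factorial : ℝ)))
      - (-1 : ℝ) ^ k * ((2 * k).factorial : ℝ) / ((n : ℝ) ^ (2 * k + 1)) := by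
  have hn0 : (n : ℝ) ≠ 0 := by positivity
  intro k
  induction k with
  | zero =>
      simp only [mul_zero, pow_zero, one_mul, Nat.factorial_zero]
      have hder : ∀ x ∈ Set.uIcc (-π) (0 : ℝ),
          HasDerivAt (fun x : ℝ => -Real.cos ((n : ℝ) * x) / n) (Real.sin ((n : ℝ) * x)) x := by
        intro x _
        have hx1 : HasDerivAt (fun x : ℝ => (n : ℝ) * x) (n : ℝ) x := by
          simpa using (hasDerivAt_id x).const_mul (n : ℝ)
        have := (hx1.cos.neg).div_const (n : ℝ)
        refine this.congr_deriv ?_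
        field_simp
      have hinteg : IntervalIntegrable (fun x : ℝ => Real.sin ((n : ℝ) * x))
          MeasureTheory.volume (-π) 0 := by
        apply Continuous.intervalIntegrable; fun_prop
      rw [intervalIntegral.integral_eq_sub_of_hasDerivAt hder hinteg]
      have hcos : Real.cos ((n : ℝ) * -π) = (-1) ^ n := by
        rw [mul_neg, Real.cos_neg, cos_n_pi]
      simp [hcos, cos_n_pi]
      field_simp
      ring
  | succ k ih =>
      have h2 : (∫ x in (-π)..(0:ℝ), x ^ (2 * (k+1)) * Real.sin (n * x))
          = ∫ x in (-π)..(0:ℝ), x ^ (2 * k + 2) * Real.sin (n * x) := by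
        rw [show 2 * (k + 1) = 2 * k + 2 from by ring]
      rw [h2, J_rec k n hn, ih, Finset.sum_range_succ' _ (k + 1)]
      have hshift : ∀ i ∈ Finset.range (k + 1),
          π ^ (2 * ((k + 1 : ℕ) : ℤ) - 2 * ((i + 1 : ℕ) : ℤ)) * (-1 : ℝ) ^ (n + (i + 1)) *
              ((2 * (k + 1)).factorial : ℝ) /
            ((n : ℝ) ^ (2 * (i + 1) + 1) * ((2 * (k + 1) - 2 * (i + 1)).factorial : ℝ)) =
          (-((((2 * k : ℕ) : ℝ) + 2) * (((2 * k : ℕ) : ℝ) + 1) / (n : ℝ) ^ 2)) *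
            (π ^ (2 * (k : ℤ) - 2 * (i : ℤ)) * (-1 : ℝ) ^ (n + i) * ((2 * k).factorial : ℝ) /
              ((n : ℝ) ^ (2 * i + 1) * ((2 * k - 2 * i).factorial : ℝ))) := by
        intro i hi
        have hsub : 2 * (k + 1) - 2 * (i + 1) = 2 * k - 2 * i := by omega
        have hexp : 2 * ((k + 1 : ℕ) : ℤ) - 2 * ((i + 1 : ℕ) : ℤ)
            = 2 * (k : ℤ) - 2 * (i : ℤ) := by push_cast; ring
        have hfac : ((2 * (k + 1)).factorial : ℝ)
            = (2 * (k : ℝ) + 2) * (2 * (k : ℝ) + 1) * ((2 * k).factorial : ℝ) := by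
          rw [show 2 * (k + 1) = (2 * k + 1) + 1 from by ring, Nat.factorial_succ,
            Nat.factorial_succ]
          push_cast; ring
        have hfne : (((2 * k - 2 * i).factorial : ℝ)) ≠ 0 := by
          exact_mod_cast (Nat.factorial_pos _).ne'
        rw [hsub, hexp, hfac]
        push_cast
        have hpp : (n : ℝ) ^ (2 * (i + 1) + 1) = (n : ℝ) ^ (2 * i + 1) * (n : ℝ) ^ 2 := by
          rw [← pow_add]; ring_nf
        rw [hpp]
        field_simp
        ring
      rw [Finset.sum_congr rfl hshift, ← Finset.mul_sum]
      have h00 : π ^ (2 * ((k + 1 : ℕ) : ℤ) - 2 * ((0 : ℕ) : ℤ)) * (-1 : ℝ) ^ (n + 0) *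
            ((2 * (k + 1)).factorial : ℝ) /
          ((n : ℝ) ^ (2 * 0 + 1) * ((2 * (k + 1) - 2 * 0).factorial : ℝ))
          = π ^ (2 * k + 2) * (-1 : ℝ) ^ n / n := by
        have hfne : (((2 * (k + 1)).factorial : ℝ)) ≠ 0 := by
          exact_mod_cast (Nat.factorial_pos _).ne'
        have hexp : 2 * ((k + 1 : ℕ) : ℤ) - 2 * ((0 : ℕ) : ℤ) = ((2 * k + 2 : ℕ) : ℤ) := by
          push_cast; ring
        rw [hexp, zpow_natCast]
        simp only [Nat.mul_zero, Nat.sub_zero, pow_one, add_zero]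
        field_simp
        ring
      rw [h00]
      set S := ∑ l ∈ Finset.range (k + 1), π ^ (2 * (k : ℤ) - 2 * (l : ℤ)) * (-1 : ℝ) ^ (n + l) *
        ((2 * k).factorial : ℝ) / ((n : ℝ) ^ (2 * l + 1) * ((2 * k - 2 * l).factorial : ℝ)) with hS
      have hfac : ((2 * (k + 1)).factorial : ℝ)
          = (2 * (k : ℝ) + 2) * (2 * (k : ℝ) + 1) * ((2 * k).factorial : ℝ) := by
        rw [show 2 * (k + 1) = (2 * k + 1) + 1 from by ring, Nat.factorial_succ,
          Nat.factorial_succ]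
        push_cast; ring
      have hpp : (n : ℝ) ^ (2 * (k + 1) + 1) = (n : ℝ) ^ (2 * k + 1) * (n : ℝ) ^ 2 := by
        rw [← pow_add]; ring_nf
      rw [hfac, hpp]
      push_cast
      field_simp
      ring

/-- `(1/π) ∫_{-π}^0 x^(2k) sin(nx) dx
    = ∑_{l=0}^{k} π^(2k-2l-1) (-1)^(n+l) (2k)! / (n^(2l+1) (2k-2l)!)
      - (-1)^k (2k)! / (π n^(2k+1))`. -/
theorem stmt_4 (k n : ℕ) (hn : 1 ≤ n) :
    (1 / π) * ∫ x in (-π)..(0 : ℝ), x ^ (2 * k) * Real.sin (n * x) =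
      (∑ l ∈ Finset.range (k + 1),
        π ^ (2 * (k : ℤ) - 2 * (l : ℤ) - 1) * (-1) ^ (n + l) * ((2 * k).factorial : ℝ) /
          ((n : ℝ) ^ (2 * l + 1) * ((2 * k - 2 * l).factorial : ℝ)))
      - (-1 : ℝ) ^ k * ((2 * k).factorial : ℝ) / (π * (n : ℝ) ^ (2 * k + 1)) := by
  have hpi : (π : ℝ) ≠ 0 := Real.pi_ne_zero
  rw [J_formula n hn k, mul_sub, Finset.mul_sum]
  congr 1
  · refine Finset.sum_congr rfl (fun l _ => ?_)
    rw [zpow_sub_one₀ hpi]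
    field_simp
  · field_simp
end

section
/- For every integer k ≥ 1 there exists a rational number Q such that Σ_{n=1}^{∞} (-1)^{n-1}/(2n-1)^{2k+1} = Q · π^{2k+1}. -/
open Real

/-- For every integer `k ≥ 1` there is a rational `Q` with
`∑_{n=1}^∞ (-1)^(n-1)/(2n-1)^(2k+1) = Q π^(2k+1)`. -/
theorem stmt_6 (k : ℕ) (hk : 1 ≤ k) :
    ∃ Q : ℚ, ∑' n : ℕ, (-1 : ℝ) ^ n / (2 * (n : ℝ) + 1) ^ (2 * k + 1) =
      (Q : ℝ) * π ^ (2 * k + 1) := by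
  have hx : (1 / 4 : ℝ) ∈ Set.Icc (0 : ℝ) 1 := by constructor <;> norm_num
  have H := hasSum_one_div_nat_pow_mul_sin (k := k) (by omega) hx
  set f : ℕ → ℝ := fun n : ℕ => 1 / (n : ℝ) ^ (2 * k + 1) * Real.sin (2 * π * n * (1 / 4))
  set S : ℝ := (-1 : ℝ) ^ (k + 1) * (2 * π) ^ (2 * k + 1) / 2 / (Nat.factorial (2 * k + 1)) *
        (Polynomial.map (algebraMap ℚ ℝ) (Polynomial.bernoulli (2 * k + 1))).eval (1/4)
  have hcos : ∀ m : ℕ, Real.sin (2 * π * (2 * m + 1) * (1 / 4)) = (-1 : ℝ) ^ m := by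
    intro m
    have : 2 * π * (2 * (m : ℝ) + 1) * (1 / 4) = m * π + π / 2 := by ring
    rw [this, Real.sin_add, Real.sin_nat_mul_pi, Real.cos_pi_div_two, Real.sin_pi_div_two]
    have := Real.cos_nat_mul_pi_sub 0 m
    simp at this
    simp [this]
  have hinj : Function.Injective (fun m : ℕ => 2 * m + 1) := by
    intro a b h; simp only at h; omega
  have hzero : ∀ n ∉ Set.range (fun m : ℕ => 2 * m + 1), f n = 0 := by
    intro n hn
    have : Even n := by
      rcases Nat.even_or_odd n with h | h
      · exact h
      · exfalso; apply hn; obtain ⟨m, hm⟩ := h; exact ⟨m, hm.symm⟩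
    obtain ⟨m, hm⟩ := this
    have : 2 * π * (n : ℝ) * (1 / 4) = m * π := by
      subst hm; push_cast; ring
    simp only [f, this, Real.sin_nat_mul_pi, mul_zero]
  have H2 : HasSum (fun m : ℕ => (-1 : ℝ) ^ m / (2 * (m : ℝ) + 1) ^ (2 * k + 1)) S := by
    have := (hinj.hasSum_iff hzero).mpr H
    refine this.congr_fun fun m => ?_
    simp only [Function.comp, f]
    push_cast
    rw [hcos m]
    ring
  refine ⟨(-1 : ℚ) ^ (k + 1) * 2 ^ (2 * k + 1) / 2 / (Nat.factorial (2 * k + 1)) *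
    ((Polynomial.bernoulli (2 * k + 1)).eval (1/4 : ℚ)), ?_⟩
  rw [H2.tsum_eq]
  have heval : (Polynomial.map (algebraMap ℚ ℝ) (Polynomial.bernoulli (2 * k + 1))).eval
      ((1 : ℝ)/4) = ((((Polynomial.bernoulli (2 * k + 1)).eval (1/4 : ℚ) : ℚ)) : ℝ) := by
    have : ((1 : ℝ)/4) = algebraMap ℚ ℝ (1/4 : ℚ) := by norm_num
    rw [this, Polynomial.eval_map, Polynomial.eval₂_at_apply]
    norm_num
  simp only [S, mul_pow, heval]
  push_cast
  ring
end

section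
/- Σ_{n=1}^{∞} (-1)^{n-1}/(2n-1)^{5} = 5·π^{5}/1536. -/
open Real Set

lemma bern5_eval : (Polynomial.bernoulli 5).eval ((1:ℚ) / 4) = -25 / 1024 := by
  simp_rw [Polynomial.bernoulli, Finset.sum_range_succ, Polynomial.eval_add,
    Polynomial.eval_monomial]
  rw [Finset.sum_range_zero, Polynomial.eval_zero, zero_add, bernoulli_one,
    bernoulli_eq_bernoulli'_of_ne_one zero_ne_one, bernoulli'_zero,
    bernoulli_eq_bernoulli'_of_ne_one (by decide : 2 ≠ 1), bernoulli'_two,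
    bernoulli_eq_bernoulli'_of_ne_one (by decide : 3 ≠ 1),
    bernoulli'_eq_zero_of_odd (by decide) (by norm_num),
    bernoulli_eq_bernoulli'_of_ne_one (by decide : 4 ≠ 1), bernoulli'_four,
    bernoulli_eq_bernoulli'_of_ne_one (by decide : 5 ≠ 1),
    bernoulli'_eq_zero_of_odd (by decide) (by norm_num)]
  norm_num [Nat.choose]

lemma hasSum_mod4_five :
    HasSum (fun n : ℕ => (1 : ℝ) / (n : ℝ) ^ 5 * Real.sin (π * n / 2)) (5 * π ^ 5 / 1536) := by
  apply (congr_arg₂ HasSum ?_ ?_).to_iff.mp <|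
    hasSum_one_div_nat_pow_mul_sin two_ne_zero (?_ : 1 / 4 ∈ Icc (0 : ℝ) 1)
  · ext1 n
    norm_num
    left
    congr 1
    ring
  · have : (1 / 4 : ℝ) = (algebraMap ℚ ℝ) (1 / 4 : ℚ) := by norm_num
    rw [this, mul_pow, Polynomial.eval_map, Polynomial.eval₂_at_apply,
      (by norm_num : 2 * 2 + 1 = 5), bern5_eval]
    norm_num [Nat.factorial]
    field_simp
    ring
  · rw [mem_Icc]; constructor <;> linarith

theorem stmt_11 : ∑' n : ℕ, (-1 : ℝ) ^ n / (2 * (n : ℝ) + 1) ^ 5 = 5 * π ^ 5 / 1536 := by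
  have h := hasSum_mod4_five
  set f : ℕ → ℝ := fun n => (1 : ℝ) / (n : ℝ) ^ 5 * Real.sin (π * n / 2) with hf
  have hinj : Function.Injective (fun m : ℕ => 2 * m + 1) := by intro a b hab; dsimp only at hab; omega
  have hvanish : ∀ x ∉ Set.range (fun m : ℕ => 2 * m + 1), f x = 0 := by
    intro x hx
    have hx' : Even x := by
      rcases Nat.even_or_odd x with he | ho
      · exact he
      · obtain ⟨k, hk⟩ := ho
        exact absurd ⟨k, hk.symm⟩ hx
    obtain ⟨m, rfl⟩ := hx'
    have hs : Real.sin (π * ((m : ℝ) + m) / 2) = 0 := by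
      rw [(by ring : π * ((m : ℝ) + m) / 2 = m * π)]
      exact Real.sin_nat_mul_pi m
    simp [hf, hs]
  have h2 : HasSum (f ∘ fun m : ℕ => 2 * m + 1) (5 * π ^ 5 / 1536) :=
    (hinj.hasSum_iff hvanish).mpr h
  have key : ∀ n : ℕ, (f ∘ fun m : ℕ => 2 * m + 1) n = (-1 : ℝ) ^ n / (2 * (n : ℝ) + 1) ^ 5 := by
    intro n
    have hcos : Real.cos (n * π) = (-1 : ℝ) ^ n := by
      simpa using Real.cos_nat_mul_pi_sub 0 n
    have hsin : Real.sin (π * ((2 * n + 1 : ℕ) : ℝ) / 2) = (-1 : ℝ) ^ n := by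
      push_cast
      rw [(by ring : π * (2 * (n : ℝ) + 1) / 2 = n * π + π / 2)]
      rw [Real.sin_add, Real.sin_nat_mul_pi, Real.cos_pi_div_two, Real.sin_pi_div_two, hcos]
      ring
    simp only [Function.comp, hf, hsin]
    push_cast
    ring
  have h3 : HasSum (fun n : ℕ => (-1 : ℝ) ^ n / (2 * (n : ℝ) + 1) ^ 5) (5 * π ^ 5 / 1536) :=
    h2.congr_fun fun n => (key n).symm
  exact h3.tsum_eq
end

section
/- Σ_{n=1}^{∞} (-1)^{n-1}/(2n-1)^{7} = 61·π^{7}/184320. -/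
open Real Finset

lemma bernoulli'_five' : bernoulli' 5 = 0 := by
  rw [bernoulli'_def]
  norm_num [Nat.choose, Finset.sum_range_succ]

lemma bernoulli'_six' : bernoulli' 6 = 1 / 42 := by
  rw [bernoulli'_def]
  norm_num [Nat.choose, Finset.sum_range_succ, bernoulli'_five']

lemma bernoulli'_seven' : bernoulli' 7 = 0 := by
  rw [bernoulli'_def]
  norm_num [Nat.choose, Finset.sum_range_succ, bernoulli'_five', bernoulli'_six']

lemma bernoulli_seven_eval : (Polynomial.bernoulli 7).eval (1 / 4 : ℚ) = 427 / 16384 := by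
  simp_rw [Polynomial.bernoulli, Finset.sum_range_succ, Polynomial.eval_add,
    Polynomial.eval_monomial, Finset.sum_range_zero, Polynomial.eval_zero, zero_add,
    bernoulli, bernoulli'_five', bernoulli'_six', bernoulli'_seven']
  norm_num [Nat.choose]

lemma hasSum_beta_seven :
    HasSum (fun n : ℕ => (1 : ℝ) / (n : ℝ) ^ 7 * Real.sin (π * n / 2)) (61 * π ^ 7 / 184320) := by
  apply (congr_arg₂ HasSum ?_ ?_).to_iff.mp <|
    hasSum_one_div_nat_pow_mul_sin (three_ne_zero) (?_ : 1 / 4 ∈ Set.Icc (0 : ℝ) 1)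
  · ext1 n
    norm_num
    left
    congr 1
    ring
  · have : (1 / 4 : ℝ) = (algebraMap ℚ ℝ) (1 / 4 : ℚ) := by norm_num
    rw [this, mul_pow, Polynomial.eval_map, Polynomial.eval₂_at_apply,
      (by norm_num : 2 * 3 + 1 = 7), bernoulli_seven_eval]
    norm_num [Nat.factorial]
    field_simp
    ring
  · rw [Set.mem_Icc]; constructor <;> linarith

theorem stmt_12 : ∑' n : ℕ, (-1 : ℝ) ^ n / (2 * (n : ℝ) + 1) ^ 7 = 61 * π ^ 7 / 184320 := by
  have hinj : Function.Injective (fun m : ℕ => 2 * m + 1) := fun a b h => by simpa using h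
  have key : HasSum (fun m : ℕ => (-1 : ℝ) ^ m / (2 * (m : ℝ) + 1) ^ 7)
      (61 * π ^ 7 / 184320) := by
    rw [show (fun m : ℕ => (-1 : ℝ) ^ m / (2 * (m : ℝ) + 1) ^ 7) =
        (fun n : ℕ => (1 : ℝ) / (n : ℝ) ^ 7 * Real.sin (π * n / 2)) ∘ (fun m => 2 * m + 1) from ?_]
    · refine (hinj.hasSum_iff ?_).mpr hasSum_beta_seven
      intro n hn
      obtain ⟨m, rfl⟩ : ∃ m, n = 2 * m := by
        rcases Nat.even_or_odd n with ⟨m, hm⟩ | ⟨m, hm⟩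
        · exact ⟨m, by omega⟩
        · exact absurd ⟨m, by simp; omega⟩ hn
      have : π * (2 * m : ℕ) / 2 = m * π := by push_cast; ring
      rw [this, Real.sin_nat_mul_pi, mul_zero]
    · ext m
      have : π * (2 * m + 1 : ℕ) / 2 = m * π + π / 2 := by push_cast; ring
      rw [Function.comp_apply, this, Real.sin_add_pi_div_two]
      have hc : Real.cos (m * π) = (-1 : ℝ) ^ m := by
        simpa using Real.cos_nat_mul_pi_sub 0 m
      rw [hc]
      push_cast
      ring
  exact key.tsum_eq
end
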